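/- Let n be a positive integer, a = (a_1,...,a_n) and b = (b_1,...,b_n) be n-tuples of complex numbers with b_k ≠ 0 for all k, and p = (p_1,...,p_n) nonnegative real weights with ∑_{i=1}^n p_i = 1. If there exist α ∈ ℂ and r > 0 such that a_k / conj(b_k) lies in the closed disk D̄(α,r) = {z ∈ ℂ : |z - α| ≤ r} for every k ∈ {1,...,n}, then ∑_{k=1}^n p_k |a_k|^2 + (|α|^2 - r^2) ∑_{k=1}^n p_k |b_k|^2 ≤ 2 Re[ conj(α) · ∑_{k=1}^n p_k a_k b_k ]. -/

import Mathlib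

theorem stmt_0 (n : ℕ) (hn : 0 < n) (a b : Fin n → ℂ) (p : Fin n → ℝ)
    (hb : ∀ k, b k ≠ 0) (hp : ∀ k, 0 ≤ p k) (hp1 : ∑ i, p i = 1)
    (α : ℂ) (r : ℝ) (hr : 0 < r)
    (h : ∀ k, ‖a k / (starRingEnd ℂ) (b k) - α‖ ≤ r) :
    ∑ k, p k * ‖a k‖ ^ 2
      + (‖α‖ ^ 2 - r ^ 2) * ∑ k, p k * ‖b k‖ ^ 2
      ≤ 2 * ((starRingEnd ℂ) α * ∑ k, (p k : ℂ) * a k * b k).re := by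
  have key : ∀ k, ‖a k‖ ^ 2
      + (‖α‖ ^ 2 - r ^ 2) * ‖b k‖ ^ 2
      ≤ 2 * ((starRingEnd ℂ) α * (a k * b k)).re := by
    intro k
    have hc : (starRingEnd ℂ) (b k) ≠ 0 := by
      simpa using hb k
    have h1 : ‖a k - α * (starRingEnd ℂ) (b k)‖ ≤ r * ‖b k‖ := by
      have heq : a k / (starRingEnd ℂ) (b k) - α
          = (a k - α * (starRingEnd ℂ) (b k)) / (starRingEnd ℂ) (b k) := by
        field_simp
      have := mul_le_mul_of_nonneg_right (h k) (norm_nonneg (b k))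
      rw [heq, norm_div, Complex.norm_conj, div_mul_cancel₀] at this
      · exact this
      · exact norm_ne_zero_iff.mpr (hb k)
    have h2 : ‖a k - α * (starRingEnd ℂ) (b k)‖ ^ 2 ≤ (r * ‖b k‖) ^ 2 := by
      exact pow_le_pow_left₀ (norm_nonneg _) h1 2
    rw [mul_pow] at h2
    simp only [Complex.sq_norm, Complex.normSq_apply, Complex.mul_re, Complex.mul_im,
      Complex.sub_re, Complex.sub_im, Complex.conj_re, Complex.conj_im] at h2 ⊢
    nlinarith [h2]
  have hre : 2 * ((starRingEnd ℂ) α * ∑ k, (p k : ℂ) * a k * b k).re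
      = ∑ k, p k * (2 * ((starRingEnd ℂ) α * (a k * b k)).re) := by
    rw [Finset.mul_sum, Complex.re_sum, Finset.mul_sum]
    congr 1; ext k
    have : (starRingEnd ℂ) α * ((p k : ℂ) * a k * b k)
        = (p k : ℂ) * ((starRingEnd ℂ) α * (a k * b k)) := by ring
    rw [this, Complex.re_ofReal_mul]
    ring
  rw [hre, Finset.mul_sum, ← Finset.sum_add_distrib]
  apply Finset.sum_le_sum
  intro k _
  have := mul_le_mul_of_nonneg_left (key k) (hp k)
  nlinarith [this]
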